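/- For h ∈ ℝ and δ > 0, ∫_{−∞}^{h} [φ(x) − (φ(h)/Φ(h)) e^{−2δh − 3δ²/2 + δx} Φ(x − δ)] dx = Φ(h) − (1/Φ(h)) · (φ(h)/δ) [e^{−δh − 3δ²/2} Φ(h − δ) − e^{−2δh} Φ(h − 2δ)]. -/

import Mathlib

open MeasureTheory Set

/-- Standard normal density. -/
noncomputable def stdGaussPDF (x : ℝ) : ℝ :=
  (Real.sqrt (2 * Real.pi))⁻¹ * Real.exp (-x ^ 2 / 2)

/-- Standard normal c.d.f. `Φ`. -/
noncomputable def stdGaussCDF (t : ℝ) : ℝ := ∫ x in Set.Iic t, stdGaussPDF x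

lemma stdGaussPDF_eq_gaussian (x : ℝ) :
    stdGaussPDF x = ProbabilityTheory.gaussianPDFReal 0 1 x := by
  unfold stdGaussPDF ProbabilityTheory.gaussianPDFReal
  norm_num [neg_div]

lemma integrable_stdGaussPDF : Integrable stdGaussPDF := by
  have := ProbabilityTheory.integrable_gaussianPDFReal 0 1
  exact this.congr (by filter_upwards with x using (stdGaussPDF_eq_gaussian x).symm)

lemma stdGaussPDF_nonneg (x : ℝ) : 0 ≤ stdGaussPDF x := by
  rw [stdGaussPDF_eq_gaussian]; exact ProbabilityTheory.gaussianPDFReal_nonneg 0 1 x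

lemma continuous_stdGaussPDF : Continuous stdGaussPDF := by
  unfold stdGaussPDF; fun_prop

lemma stdGaussCDF_nonneg (t : ℝ) : 0 ≤ stdGaussCDF t :=
  setIntegral_nonneg measurableSet_Iic fun x _ => stdGaussPDF_nonneg x

lemma stdGaussCDF_le_one (t : ℝ) : stdGaussCDF t ≤ 1 := by
  have h1 : stdGaussCDF t ≤ ∫ x, stdGaussPDF x :=
    setIntegral_le_integral integrable_stdGaussPDF
      (Filter.Eventually.of_forall fun x => stdGaussPDF_nonneg x)
  have h2 : ∫ x, stdGaussPDF x = 1 := by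
    rw [show (fun x => stdGaussPDF x) = ProbabilityTheory.gaussianPDFReal 0 1 from
      funext stdGaussPDF_eq_gaussian]
    exact ProbabilityTheory.integral_gaussianPDFReal_eq_one 0 one_ne_zero
  linarith

lemma hasDerivAt_stdGaussCDF (x : ℝ) : HasDerivAt stdGaussCDF (stdGaussPDF x) x := by
  have heq : ∀ t : ℝ, stdGaussCDF t = stdGaussCDF 0 + ∫ u in (0:ℝ)..t, stdGaussPDF u := by
    intro t
    have := intervalIntegral.integral_Iic_sub_Iic (μ := volume) (f := stdGaussPDF) (a := (0:ℝ)) (b := t)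
      integrable_stdGaussPDF.integrableOn integrable_stdGaussPDF.integrableOn
    simp only [stdGaussCDF]
    linarith [this]
  have hd : HasDerivAt (fun t => stdGaussCDF 0 + ∫ u in (0:ℝ)..t, stdGaussPDF u)
      (stdGaussPDF x) x := by
    refine HasDerivAt.const_add _ ?_
    exact intervalIntegral.integral_hasDerivAt_right
      (integrable_stdGaussPDF.intervalIntegrable)
      (continuous_stdGaussPDF.stronglyMeasurableAtFilter _ _)
      continuous_stdGaussPDF.continuousAt
  exact hd.congr_of_eventuallyEq (Filter.Eventually.of_forall heq)

lemma continuous_stdGaussCDF : Continuous stdGaussCDF := by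
  have : Differentiable ℝ stdGaussCDF := fun x => (hasDerivAt_stdGaussCDF x).differentiableAt
  exact this.continuous

lemma tendsto_stdGaussCDF_atBot : Filter.Tendsto stdGaussCDF Filter.atBot (nhds 0) := by
  have h := intervalIntegral_tendsto_integral_Iic (μ := volume) (f := stdGaussPDF)
    (a := fun x : ℝ => x) (l := Filter.atBot) 0
    integrable_stdGaussPDF.integrableOn Filter.tendsto_id
  have heq : ∀ t : ℝ, stdGaussCDF t = stdGaussCDF 0 - ∫ u in t..(0:ℝ), stdGaussPDF u := by
    intro t
    have := intervalIntegral.integral_Iic_sub_Iic (μ := volume) (f := stdGaussPDF) (a := t) (b := (0:ℝ))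
      integrable_stdGaussPDF.integrableOn integrable_stdGaussPDF.integrableOn
    simp only [stdGaussCDF]
    linarith [this]
  have : Filter.Tendsto (fun t => stdGaussCDF 0 - ∫ u in t..(0:ℝ), stdGaussPDF u)
      Filter.atBot (nhds (stdGaussCDF 0 - ∫ x in Set.Iic (0:ℝ), stdGaussPDF x)) :=
    Filter.Tendsto.const_sub _ h
  rw [show stdGaussCDF 0 - ∫ x in Set.Iic (0:ℝ), stdGaussPDF x = 0 by
    simp [stdGaussCDF]] at this
  exact this.congr fun t => (heq t).symm

lemma integrableOn_exp_mul_Iic' {c : ℝ} (hc : 0 < c) (a : ℝ) :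
    IntegrableOn (fun x => Real.exp (c * x)) (Iic a) := by
  have hderiv : ∀ x : ℝ, HasDerivAt (fun y => Real.exp (c * y) / c) (Real.exp (c * x)) x := by
    intro x
    have h1 : HasDerivAt (fun y : ℝ => c * y) c x := by
      simpa using (hasDerivAt_id x).const_mul c
    have h2 := (h1.exp).div_const c
    simpa [mul_div_assoc, mul_div_cancel_left₀, hc.ne'] using h2
  have key : ∀ y : ℝ, ∫ x in y..a, Real.exp (c * x) =
      Real.exp (c * a) / c - Real.exp (c * y) / c := by
    intro y
    exact intervalIntegral.integral_eq_sub_of_hasDerivAt (fun x _ => hderiv x)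
      ((Real.continuous_exp.comp (continuous_const.mul continuous_id)).intervalIntegrable y a)
  refine integrableOn_Iic_of_intervalIntegral_norm_bounded (Real.exp (c * a) / c) a
    (fun y : ℝ => ((Real.continuous_exp.comp
      (continuous_const.mul continuous_id)).integrableOn_Ioc)) Filter.tendsto_id ?_
  filter_upwards with y
  have hpos : ∀ x : ℝ, ‖Real.exp (c * x)‖ = Real.exp (c * x) := fun x =>
    Real.norm_of_nonneg (Real.exp_pos _).le
  simp only [id_eq, Real.norm_eq_abs, Real.abs_exp, key y]
  have : 0 < Real.exp (c * y) / c := div_pos (Real.exp_pos _) hc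
  linarith

/-- Key exponential identity: `e^{δx} φ(x−δ) = e^{3δ²/2} φ(x−2δ)`. -/
lemma exp_pdf_shift (δ x : ℝ) :
    Real.exp (δ * x) * stdGaussPDF (x - δ) =
      Real.exp (3 * δ ^ 2 / 2) * stdGaussPDF (x - 2 * δ) := by
  unfold stdGaussPDF
  rw [show Real.exp (δ * x) * ((Real.sqrt (2 * Real.pi))⁻¹ * Real.exp (-(x - δ) ^ 2 / 2))
      = (Real.sqrt (2 * Real.pi))⁻¹ * (Real.exp (δ * x) * Real.exp (-(x - δ) ^ 2 / 2)) by ring,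
    show Real.exp (3 * δ ^ 2 / 2) * ((Real.sqrt (2 * Real.pi))⁻¹
        * Real.exp (-(x - 2 * δ) ^ 2 / 2))
      = (Real.sqrt (2 * Real.pi))⁻¹
        * (Real.exp (3 * δ ^ 2 / 2) * Real.exp (-(x - 2 * δ) ^ 2 / 2)) by ring,
    ← Real.exp_add, ← Real.exp_add]
  congr 1
  ring

/-- The normalizing constant `c₁ = ∫_{−∞}^h p̃₁(x) dx = Φ(h) − κ_{h,δ}/Φ(h)`, where
`κ_{h,δ} = (φ(h)/δ)[e^{−δh−3δ²/2}Φ(h−δ) − e^{−2δh}Φ(h−2δ)]`. -/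
theorem c_one_formula (h δ : ℝ) (hδ : 0 < δ) :
    ∫ x in Set.Iic h,
        (stdGaussPDF x
          - stdGaussPDF h / stdGaussCDF h *
              Real.exp (-2 * δ * h - 3 * δ ^ 2 / 2 + δ * x) * stdGaussCDF (x - δ))
      = stdGaussCDF h
        - (1 / stdGaussCDF h) * (stdGaussPDF h / δ) *
            (Real.exp (-δ * h - 3 * δ ^ 2 / 2) * stdGaussCDF (h - δ)
              - Real.exp (-2 * δ * h) * stdGaussCDF (h - 2 * δ)) := by
  obtain ⟨K, hK⟩ : ∃ K : ℝ, K = stdGaussPDF h / stdGaussCDF h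
      * Real.exp (-2 * δ * h - 3 * δ ^ 2 / 2) := ⟨_, rfl⟩
  -- antiderivative
  set G : ℝ → ℝ := fun x => stdGaussCDF x -
    K * (δ⁻¹ * (Real.exp (δ * x) * stdGaussCDF (x - δ)
      - Real.exp (3 * δ ^ 2 / 2) * stdGaussCDF (x - 2 * δ))) with hG
  set f : ℝ → ℝ := fun x => stdGaussPDF x
    - stdGaussPDF h / stdGaussCDF h *
        Real.exp (-2 * δ * h - 3 * δ ^ 2 / 2 + δ * x) * stdGaussCDF (x - δ) with hf
  have hfK : ∀ x, f x = stdGaussPDF x - K * (Real.exp (δ * x) * stdGaussCDF (x - δ)) := by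
    intro x
    simp only [hf]
    rw [hK, show (-2 * δ * h - 3 * δ ^ 2 / 2 + δ * x) = (-2 * δ * h - 3 * δ ^ 2 / 2) + δ * x
      from by ring, Real.exp_add]
    ring
  have hderiv : ∀ x ∈ Set.Iic h, HasDerivAt G (f x) x := by
    intro x _
    have h1 : HasDerivAt (fun y => stdGaussCDF (y - δ)) (stdGaussPDF (x - δ)) x := by
      exact (hasDerivAt_stdGaussCDF (x - δ)).comp_sub_const x δ
    have h2 : HasDerivAt (fun y => stdGaussCDF (y - 2 * δ)) (stdGaussPDF (x - 2 * δ)) x := by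
      exact (hasDerivAt_stdGaussCDF (x - 2 * δ)).comp_sub_const x (2 * δ)
    have hexp : HasDerivAt (fun y => Real.exp (δ * y)) (Real.exp (δ * x) * δ) x := by
      have : HasDerivAt (fun y : ℝ => δ * y) δ x := by
        simpa using (hasDerivAt_id x).const_mul δ
      simpa using this.exp
    have hmul : HasDerivAt (fun y => Real.exp (δ * y) * stdGaussCDF (y - δ))
        (Real.exp (δ * x) * δ * stdGaussCDF (x - δ)
          + Real.exp (δ * x) * stdGaussPDF (x - δ)) x := hexp.mul h1
    have hmul2 : HasDerivAt (fun y => Real.exp (3 * δ ^ 2 / 2) * stdGaussCDF (y - 2 * δ))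
        (Real.exp (3 * δ ^ 2 / 2) * stdGaussPDF (x - 2 * δ)) x := h2.const_mul _
    have hsub := (hmul.sub hmul2).const_mul δ⁻¹
    have hsub2 := hsub.const_mul K
    have hfinal := (hasDerivAt_stdGaussCDF x).sub hsub2
    have : stdGaussCDF x - stdGaussCDF x = 0 := sub_self _
    rw [hfK x]
    refine hfinal.congr_deriv ?_
    rw [exp_pdf_shift δ x]
    field_simp
    ring
  have hint : IntegrableOn f (Set.Iic h) := by
    have h1 : IntegrableOn (fun x => stdGaussPDF x) (Set.Iic h) :=
      integrable_stdGaussPDF.integrableOn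
    have h2 : IntegrableOn (fun x => K * (Real.exp (δ * x) * stdGaussCDF (x - δ)))
        (Set.Iic h) := by
      have hbound : IntegrableOn (fun x => |K| * Real.exp (δ * x)) (Set.Iic h) :=
        (integrableOn_exp_mul_Iic' hδ h).const_mul _
      refine hbound.integrable.mono ?_ ?_
      · exact (Continuous.aestronglyMeasurable (by
          exact continuous_const.mul ((Real.continuous_exp.comp
            (continuous_const.mul continuous_id)).mul
            (continuous_stdGaussCDF.comp (continuous_id.sub continuous_const))))).restrict
      · filter_upwards with x
        have h01 : 0 ≤ stdGaussCDF (x - δ) := stdGaussCDF_nonneg _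
        have h02 : stdGaussCDF (x - δ) ≤ 1 := stdGaussCDF_le_one _
        have hepos := (Real.exp_pos (δ * x)).le
        have hrhs : ‖|K| * Real.exp (δ * x)‖ = |K| * Real.exp (δ * x) :=
          Real.norm_of_nonneg (by positivity)
        have hlhs : ‖K * (Real.exp (δ * x) * stdGaussCDF (x - δ))‖
            = |K| * (Real.exp (δ * x) * stdGaussCDF (x - δ)) := by
          rw [Real.norm_eq_abs, abs_mul, abs_of_nonneg (mul_nonneg hepos h01)]
        rw [hrhs, hlhs]
        have := mul_le_mul_of_nonneg_left h02 hepos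
        nlinarith [abs_nonneg K, mul_le_mul_of_nonneg_left this (abs_nonneg K)]
    have hsub : IntegrableOn
        (fun x => stdGaussPDF x - K * (Real.exp (δ * x) * stdGaussCDF (x - δ)))
        (Set.Iic h) := h1.sub h2
    exact hsub.congr (Filter.Eventually.of_forall fun x => (hfK x).symm)
  have htendsto : Filter.Tendsto G Filter.atBot (nhds 0) := by
    have t1 : Filter.Tendsto (fun x : ℝ => stdGaussCDF x) Filter.atBot (nhds 0) :=
      tendsto_stdGaussCDF_atBot
    have t2 : Filter.Tendsto (fun x : ℝ => Real.exp (δ * x) * stdGaussCDF (x - δ))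
        Filter.atBot (nhds 0) := by
      have texp : Filter.Tendsto (fun x : ℝ => Real.exp (δ * x)) Filter.atBot (nhds 0) :=
        Real.tendsto_exp_atBot.comp
          (Filter.tendsto_atBot_atBot.mpr fun b => ⟨b / δ, fun a ha =>
            by rw [mul_comm]; exact (le_div_iff₀ hδ).mp ha⟩)
      have hb : ∀ x : ℝ, ‖Real.exp (δ * x) * stdGaussCDF (x - δ)‖ ≤ Real.exp (δ * x) := by
        intro x
        rw [Real.norm_eq_abs, abs_mul, abs_of_nonneg (Real.exp_pos _).le,
          abs_of_nonneg (stdGaussCDF_nonneg _)]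
        calc Real.exp (δ * x) * stdGaussCDF (x - δ)
            ≤ Real.exp (δ * x) * 1 :=
              mul_le_mul_of_nonneg_left (stdGaussCDF_le_one _) (Real.exp_pos _).le
          _ = Real.exp (δ * x) := mul_one _
      exact squeeze_zero_norm hb texp
    have t3 : Filter.Tendsto (fun x : ℝ =>
        Real.exp (3 * δ ^ 2 / 2) * stdGaussCDF (x - 2 * δ)) Filter.atBot (nhds 0) := by
      have := (tendsto_stdGaussCDF_atBot.comp
        (Filter.tendsto_atBot_add_const_right _ (-(2*δ)) Filter.tendsto_id)).const_mul
        (Real.exp (3 * δ ^ 2 / 2))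
      simpa [Function.comp, sub_eq_add_neg] using this
    have := t1.sub (((t2.sub t3).const_mul δ⁻¹).const_mul K)
    simpa using this
  have key := integral_Iic_of_hasDerivAt_of_tendsto'
    (f := G) (f' := f) (a := h) hderiv hint htendsto
  rw [hf] at key ⊢
  rw [key, sub_zero, hG]
  -- now pure algebra with exponentials
  rw [hK, show Real.exp (-δ * h - 3 * δ ^ 2 / 2)
      = Real.exp (-2 * δ * h - 3 * δ ^ 2 / 2) * Real.exp (δ * h) by
    rw [← Real.exp_add]; ring_nf,
    show Real.exp (-2 * δ * h)
      = Real.exp (-2 * δ * h - 3 * δ ^ 2 / 2) * Real.exp (3 * δ ^ 2 / 2) by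
    rw [← Real.exp_add]; ring_nf]
  field_simp
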